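/- If the flow φ is l1-nonexpansive on B_δ(x*) — meaning that for all x, y ∈ B_δ(x*) and all T ≥ 0 such that φ(s,x), φ(s,y) ∈ B_δ(x*) for all 0 ≤ s ≤ T, one has ‖φ(t,y) − φ(t,x)‖₁ ≤ ‖y − x‖₁ for all 0 ≤ t ≤ T — then B_δ(x*) ⊆ A(x*), i.e., every trajectory starting in B_δ(x*) converges to x*. -/

import Mathlib

/-- The `l1` norm of a vector: sum of absolute values of entries. -/
noncomputable def norm1 {n : ℕ} (v : Fin n → ℝ) : ℝ := ∑ i, |v i|


lemma norm1_nonneg {n : ℕ} (v : Fin n → ℝ) : 0 ≤ norm1 v :=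
  Finset.sum_nonneg fun i _ => abs_nonneg _

lemma norm1_zero {n : ℕ} : norm1 (0 : Fin n → ℝ) = 0 := by simp [norm1]

lemma norm1_sub_le {n : ℕ} (a b c : Fin n → ℝ) :
    norm1 (a - c) ≤ norm1 (a - b) + norm1 (b - c) := by
  rw [norm1, norm1, norm1, ← Finset.sum_add_distrib]
  refine Finset.sum_le_sum fun i _ => ?_
  have : (a - c) i = (a - b) i + (b - c) i := by simp
  rw [this]; exact abs_add_le _ _

lemma norm1_smul {n : ℕ} (c : ℝ) (v : Fin n → ℝ) : norm1 (c • v) = |c| * norm1 v := by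
  simp [norm1, abs_mul, Finset.mul_sum]

lemma continuous_norm1 {n : ℕ} : Continuous (norm1 : (Fin n → ℝ) → ℝ) := by
  unfold norm1
  exact continuous_finset_sum _ fun i _ => (continuous_apply i).abs

lemma abs_apply_le_norm1 {n : ℕ} (v : Fin n → ℝ) (i : Fin n) : |v i| ≤ norm1 v :=
  Finset.single_le_sum (f := fun j => |v j|) (fun j _ => abs_nonneg _) (Finset.mem_univ i)

section flow

variable {n : ℕ} (f : (Fin n → ℝ) → (Fin n → ℝ)) (L : NNReal) (hf : LipschitzWith L f)
    (φ : ℝ → (Fin n → ℝ) → (Fin n → ℝ))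
    (hφ0 : ∀ x, φ 0 x = x)
    (hφ' : ∀ x, ∀ t : ℝ, 0 ≤ t →
      HasDerivWithinAt (fun s => φ s x) (f (φ t x)) (Set.Ici 0) t)

include hf hφ0 hφ'

lemma flow_cont : ∀ x, ContinuousOn (fun t => φ t x) (Set.Ici 0) :=
  fun x t ht => (hφ' x t ht).continuousWithinAt

lemma flow_equilibrium (xstar : Fin n → ℝ) (hxstar : f xstar = 0) :
    ∀ t : ℝ, 0 ≤ t → φ t xstar = xstar := by
  intro t ht
  have key : Set.EqOn (fun s => φ s xstar) (fun _ => xstar) (Set.Icc 0 t) := by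
    apply ODE_solution_unique (v := fun _ z => f z) (fun _ => hf)
    · exact (flow_cont f L hf φ hφ0 hφ' xstar).mono (Set.Icc_subset_Ici_self)
    · intro s hs
      exact (hφ' xstar s hs.1).mono (Set.Ici_subset_Ici.mpr hs.1)
    · exact continuousOn_const
    · intro s hs
      simpa [hxstar] using (hasDerivWithinAt_const s (Set.Ici s) xstar)
    · simp [hφ0]
  exact key ⟨ht, le_rfl⟩

lemma flow_semigroup (x : Fin n → ℝ) (s : ℝ) (hs : 0 ≤ s) (t : ℝ) (ht : 0 ≤ t) :
    φ (s + t) x = φ t (φ s x) := by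
  have key : Set.EqOn (fun u => φ (s + u) x) (fun u => φ u (φ s x)) (Set.Icc 0 t) := by
    apply ODE_solution_unique (v := fun _ z => f z) (fun _ => hf)
    · have : ContinuousOn (fun u : ℝ => s + u) (Set.Icc 0 t) := by fun_prop
      refine ((flow_cont f L hf φ hφ0 hφ' x).comp this ?_)
      intro u hu
      exact le_trans hs (le_add_of_nonneg_right hu.1)
    · intro u hu
      have h1 := hφ' x (s + u) (by linarith [hu.1])
      have h2 : HasDerivWithinAt (fun u : ℝ => s + u) 1 (Set.Ici u) u :=
        ((hasDerivAt_id u).const_add s).hasDerivWithinAt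
      have hmaps : Set.MapsTo (fun u : ℝ => s + u) (Set.Ici u) (Set.Ici 0) := by
        intro v hv
        simp only [Set.mem_Ici] at *
        linarith [hu.1]
      have := HasDerivWithinAt.scomp u h1 h2 hmaps
      simpa [Function.comp_def] using this
    · exact (flow_cont f L hf φ hφ0 hφ' (φ s x)).mono (Set.Icc_subset_Ici_self)
    · intro u hu
      exact (hφ' (φ s x) u hu.1).mono (Set.Ici_subset_Ici.mpr hu.1)
    · simp [hφ0]
  simpa using key ⟨ht, le_rfl⟩

end flow

lemma norm_le_norm1 {n : ℕ} (v : Fin n → ℝ) : ‖v‖ ≤ norm1 v := by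
  refine (pi_norm_le_iff_of_nonneg (norm1_nonneg v)).mpr fun i => ?_
  simpa [Real.norm_eq_abs] using abs_apply_le_norm1 v i

/-- let `φ` be the flow of a Lipschitz vector field `f`, `xstar` an
asymptotically stable equilibrium. If the flow is `l1`-nonexpansive on the ball
`B_δ(xstar)`, then `B_δ(xstar)` is contained in the region of attraction of `xstar`. -/
theorem ball_subset_region_of_attraction
    {n : ℕ} (f : (Fin n → ℝ) → (Fin n → ℝ)) (L : NNReal) (hf : LipschitzWith L f)
    (φ : ℝ → (Fin n → ℝ) → (Fin n → ℝ))
    (hφ0 : ∀ x, φ 0 x = x)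
    (hφ' : ∀ x, ∀ t : ℝ, 0 ≤ t →
      HasDerivWithinAt (fun s => φ s x) (f (φ t x)) (Set.Ici 0) t)
    (xstar : Fin n → ℝ) (hxstar : f xstar = 0)
    (hstable : ∀ ε > (0 : ℝ), ∃ η > (0 : ℝ), ∀ x, norm1 (x - xstar) < η →
      ∀ t : ℝ, 0 ≤ t → norm1 (φ t x - xstar) < ε)
    (hattr : ∃ η₀ > (0 : ℝ), ∀ x, norm1 (x - xstar) < η₀ →
      Filter.Tendsto (fun t => φ t x) Filter.atTop (nhds xstar))
    (δ : ℝ) (hδ : 0 < δ)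
    (hnonexp : ∀ x y, norm1 (x - xstar) < δ → norm1 (y - xstar) < δ →
      ∀ T : ℝ, 0 ≤ T →
        (∀ s : ℝ, 0 ≤ s → s ≤ T → norm1 (φ s x - xstar) < δ ∧ norm1 (φ s y - xstar) < δ) →
        ∀ t : ℝ, 0 ≤ t → t ≤ T → norm1 (φ t y - φ t x) ≤ norm1 (y - x)) :
    ∀ x, norm1 (x - xstar) < δ →
      Filter.Tendsto (fun t => φ t x) Filter.atTop (nhds xstar) := by
  obtain ⟨η₀, hη₀, hattr'⟩ := hattr
  have hcont := flow_cont f L hf φ hφ0 hφ'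
  have heq := flow_equilibrium f L hf φ hφ0 hφ' xstar hxstar
  have hsemi := flow_semigroup f L hf φ hφ0 hφ'
  have hgc : ∀ z, ContinuousOn (fun t => norm1 (φ t z - xstar)) (Set.Ici 0) :=
    fun z => continuous_norm1.comp_continuousOn ((hcont z).sub continuousOn_const)
  have h0δ : norm1 (xstar - xstar) < δ := by simpa [norm1_zero] using hδ
  -- Step 1: trajectories starting in the ball never leave it
  have hlt : ∀ z, norm1 (z - xstar) < δ → ∀ t, 0 ≤ t → norm1 (φ t z - xstar) < δ := by
    intro z hz
    by_contra hcon
    push_neg at hcon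
    obtain ⟨t₁, ht₁0, ht₁⟩ := hcon
    set S : Set ℝ := Set.Ici (0:ℝ) ∩ (fun t => norm1 (φ t z - xstar)) ⁻¹' Set.Ici δ with hS
    have hSne : S.Nonempty := ⟨t₁, ht₁0, ht₁⟩
    have hSbd : BddBelow S := ⟨0, fun T hT => hT.1⟩
    have hSclosed : IsClosed S :=
      (hgc z).preimage_isClosed_of_isClosed isClosed_Ici isClosed_Ici
    set T₀ := sInf S with hT₀def
    have hT₀S : T₀ ∈ S := hSclosed.csInf_mem hSne hSbd
    have hT₀0 : 0 ≤ T₀ := hT₀S.1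
    have hT₀δ : δ ≤ norm1 (φ T₀ z - xstar) := hT₀S.2
    have hT₀pos : 0 < T₀ := by
      rcases hT₀0.lt_or_eq with h | h
      · exact h
      · exfalso
        rw [← h] at hT₀δ
        rw [hφ0] at hT₀δ
        linarith
    have hbelow : ∀ s, 0 ≤ s → s < T₀ → norm1 (φ s z - xstar) < δ := by
      intro s hs hsT
      by_contra h
      push_neg at h
      exact absurd (csInf_le hSbd ⟨hs, h⟩) (not_le.mpr hsT)
    have hboundlt : ∀ t, 0 ≤ t → t < T₀ → norm1 (φ t z - xstar) ≤ norm1 (z - xstar) := by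
      intro t ht htT
      have := hnonexp xstar z h0δ hz t ht
        (fun s hs hst => ⟨by simpa [heq s hs, norm1_zero] using hδ,
          hbelow s hs (lt_of_le_of_lt hst htT)⟩) t ht le_rfl
      simpa [heq t ht] using this
    have hlim : norm1 (φ T₀ z - xstar) ≤ norm1 (z - xstar) := by
      have hcw : Filter.Tendsto (fun t => norm1 (φ t z - xstar))
          (nhdsWithin T₀ (Set.Ico 0 T₀)) (nhds (norm1 (φ T₀ z - xstar))) :=
        ((hgc z T₀ hT₀0).mono (Set.Ico_subset_Ici_self)).tendsto
      have hne : (nhdsWithin T₀ (Set.Ico 0 T₀)).NeBot := by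
        apply mem_closure_iff_nhdsWithin_neBot.mp
        rw [closure_Ico hT₀pos.ne]
        exact ⟨hT₀0, le_rfl⟩
      exact le_of_tendsto hcw
        (Filter.eventually_of_mem self_mem_nhdsWithin fun s hs => hboundlt s hs.1 hs.2)
    linarith
  -- Step 2: nonexpansiveness without the confinement hypothesis
  have hle : ∀ z, norm1 (z - xstar) < δ → ∀ t, 0 ≤ t →
      norm1 (φ t z - xstar) ≤ norm1 (z - xstar) := by
    intro z hz t ht
    have := hnonexp xstar z h0δ hz t ht
      (fun s hs _ => ⟨by simpa [heq s hs, norm1_zero] using hδ, hlt z hz s hs⟩) t ht le_rfl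
    simpa [heq t ht] using this
  have hpair : ∀ z y, norm1 (z - xstar) < δ → norm1 (y - xstar) < δ → ∀ t, 0 ≤ t →
      norm1 (φ t y - φ t z) ≤ norm1 (y - z) := by
    intro z y hz hy t ht
    exact hnonexp z y hz hy t ht (fun s hs _ => ⟨hlt z hz s hs, hlt y hy s hs⟩) t ht le_rfl
  intro x hx
  set θ : ℝ := min 1 (η₀ / (2 * δ)) with hθdef
  have hθpos : 0 < θ := lt_min one_pos (by positivity)
  have hθ1 : θ ≤ 1 := min_le_left _ _
  -- monotonicity along the trajectory
  have hmono : ∀ s t, 0 ≤ s → s ≤ t → norm1 (φ t x - xstar) ≤ norm1 (φ s x - xstar) := by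
    intro s t hs hst
    have h1 : φ t x = φ (t - s) (φ s x) := by
      have := hsemi x s hs (t - s) (by linarith)
      rw [← this]
      ring_nf
    rw [h1]
    exact hle (φ s x) (hlt x hx s hs) (t - s) (by linarith)
  -- key decrease step
  have hstep : ∀ s, 0 ≤ s → ∀ ε, 0 < ε → ∃ t, s ≤ t ∧
      norm1 (φ t x - xstar) ≤ (1 - θ) * norm1 (φ s x - xstar) + ε := by
    intro s hs ε hε
    set z := φ s x with hzdef
    have hz : norm1 (z - xstar) < δ := hlt x hx s hs
    set y := xstar + θ • (z - xstar) with hydef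
    have hyx : y - xstar = θ • (z - xstar) := by rw [hydef]; abel
    have hyeq : norm1 (y - xstar) = θ * norm1 (z - xstar) := by
      rw [hyx, norm1_smul, abs_of_pos hθpos]
    have hyδ : norm1 (y - xstar) < δ := by
      rw [hyeq]
      calc θ * norm1 (z - xstar) ≤ 1 * norm1 (z - xstar) :=
            mul_le_mul_of_nonneg_right hθ1 (norm1_nonneg _)
        _ < δ := by linarith
    have hyη : norm1 (y - xstar) < η₀ := by
      rw [hyeq]
      have h1 : θ * norm1 (z - xstar) ≤ (η₀ / (2 * δ)) * δ :=
        mul_le_mul (min_le_right _ _) hz.le (norm1_nonneg _) (by positivity)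
      have h2 : (η₀ / (2 * δ)) * δ = η₀ / 2 := by field_simp
      linarith
    have hzy : norm1 (z - y) = (1 - θ) * norm1 (z - xstar) := by
      have h3 : z - y = (1 - θ) • (z - xstar) := by
        rw [hydef, sub_smul, one_smul]; abel
      rw [h3, norm1_smul, abs_of_nonneg (by linarith)]
    have htend0 : Filter.Tendsto (fun t => norm1 (φ t y - xstar)) Filter.atTop (nhds 0) := by
      have h4 : Filter.Tendsto (fun t => φ t y - xstar) Filter.atTop (nhds 0) := by
        simpa using (hattr' y hyη).sub_const xstar
      have := (continuous_norm1.tendsto (0 : Fin n → ℝ)).comp h4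
      simpa [norm1_zero, Function.comp_def] using this
    obtain ⟨t₀, ht₀⟩ := Metric.tendsto_atTop.mp htend0 ε hε
    set t := max t₀ 0 with htdef
    have ht0 : 0 ≤ t := le_max_right _ _
    refine ⟨s + t, le_add_of_nonneg_right ht0, ?_⟩
    have hsg : φ (s + t) x = φ t z := hsemi x s hs t ht0
    have hb1 : norm1 (φ t z - xstar) ≤ norm1 (φ t z - φ t y) + norm1 (φ t y - xstar) :=
      norm1_sub_le _ _ _
    have hb2 : norm1 (φ t z - φ t y) ≤ norm1 (z - y) := hpair y z hyδ hz t ht0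
    have hb3 : norm1 (φ t y - xstar) < ε := by
      have := ht₀ t (le_max_left _ _)
      rw [Real.dist_eq, sub_zero, abs_of_nonneg (norm1_nonneg _)] at this
      exact this
    rw [hsg]
    rw [hzy] at hb2
    linarith
  -- the norm tends to 0
  have hsmall : ∀ ε, 0 < ε → ∃ s, 0 ≤ s ∧ norm1 (φ s x - xstar) < ε := by
    intro ε hε
    by_contra hcon
    push_neg at hcon
    have hind : ∀ k : ℕ, ∃ s, 0 ≤ s ∧
        norm1 (φ s x - xstar) ≤ norm1 (x - xstar) - k * (θ * ε / 2) := by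
      intro k
      induction k with
      | zero => exact ⟨0, le_rfl, by simp [hφ0]⟩
      | succ k ih =>
        obtain ⟨s, hs, hsle⟩ := ih
        obtain ⟨t, hst, htle⟩ := hstep s hs (θ * ε / 2) (by positivity)
        refine ⟨t, le_trans hs hst, ?_⟩
        have hεg : ε ≤ norm1 (φ s x - xstar) := hcon s hs
        have hmul : θ * ε ≤ θ * norm1 (φ s x - xstar) :=
          mul_le_mul_of_nonneg_left hεg hθpos.le
        have : (1 - θ) * norm1 (φ s x - xstar) + θ * ε / 2 ≤
            norm1 (φ s x - xstar) - θ * ε / 2 := by nlinarith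
        push_cast
        linarith
    obtain ⟨k, hk⟩ := exists_nat_gt (norm1 (x - xstar) / (θ * ε / 2))
    obtain ⟨s, hs, hsle⟩ := hind k
    have hk2 : norm1 (x - xstar) < k * (θ * ε / 2) := by
      rw [div_lt_iff₀ (by positivity)] at hk
      linarith
    have := norm1_nonneg (φ s x - xstar)
    have := hcon s hs
    linarith
  have htends : Filter.Tendsto (fun t => norm1 (φ t x - xstar)) Filter.atTop (nhds 0) := by
    rw [Metric.tendsto_atTop]
    intro ε hε
    obtain ⟨s, hs, hsε⟩ := hsmall ε hε
    refine ⟨s, fun t hts => ?_⟩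
    rw [Real.dist_eq, sub_zero, abs_of_nonneg (norm1_nonneg _)]
    exact lt_of_le_of_lt (hmono s t hs hts) hsε
  rw [← tendsto_sub_nhds_zero_iff]
  rw [tendsto_zero_iff_norm_tendsto_zero]
  exact squeeze_zero (fun t => norm_nonneg _) (fun t => norm_le_norm1 _) htends
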